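/- For nonnegative reals y_I (I ⊆ [n], I nonempty), the Minkowski sum Σ_I y_I D_I equals the Q-polytope Q_n({z_J}) where z_J = Σ_{I : I∩J ≠ ∅} y_I, and D_I = conv({0} ∪ {e_i : i ∈ I}). -/

import Mathlib

open Finset
open scoped Pointwise Classical

/-- The Q-polytope `Q_n({z_J}) = {t ∈ ℝ^n : t_i ≥ 0, ∑_{i∈J} t_i ≤ z_J}`. -/
def Qpoly (n : ℕ) (z : Finset (Fin n) → ℝ) : Set (Fin n → ℝ) :=
  {t | (∀ i, 0 ≤ t i) ∧ ∀ J : Finset (Fin n), ∑ i ∈ J, t i ≤ z J}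

/-- `D_I = conv{0, e_i : i ∈ I}`. -/
def Dsimp {α : Type*} [DecidableEq α] (I : Finset α) : Set (α → ℝ) :=
  convexHull ℝ (insert 0 {x | ∃ i ∈ I, x = Pi.single i (1 : ℝ)})

lemma Dsimp_eq {n : ℕ} (A : Finset (Fin n)) :
    Dsimp A = {v | (∀ i, 0 ≤ v i) ∧ (∀ i ∉ A, v i = 0) ∧ ∑ i, v i ≤ 1} := by
  apply le_antisymm
  · apply convexHull_min
    · rintro x (rfl | ⟨i, hi, rfl⟩)
      · exact ⟨fun i => le_refl 0, fun i _ => rfl, by simp⟩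
      · refine ⟨fun j => ?_, fun j hj => ?_, by simp⟩
        · rcases eq_or_ne j i with rfl | h
          · simp
          · simp [Pi.single_apply, h.symm]
        · have : j ≠ i := fun h => hj (h ▸ hi)
          simp [Pi.single_apply, this.symm]
    · rintro x ⟨hx0, hxA, hxs⟩ y ⟨hy0, hyA, hys⟩ a b ha hb hab
      refine ⟨fun i => ?_, fun i hi => by simp [hxA i hi, hyA i hi], ?_⟩
      · simp only [Pi.add_apply, Pi.smul_apply, smul_eq_mul]
        have := hx0 i; have := hy0 i; nlinarith
      · simp only [Pi.add_apply, Pi.smul_apply, smul_eq_mul]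
        rw [Finset.sum_add_distrib, ← Finset.mul_sum, ← Finset.mul_sum]
        nlinarith [Finset.sum_nonneg (fun i (_ : i ∈ Finset.univ) => hx0 i),
          Finset.sum_nonneg (fun i (_ : i ∈ Finset.univ) => hy0 i)]
  · rintro v ⟨hv0, hvA, hvs⟩
    have hsum : ∑ i ∈ A, v i = ∑ i, v i := by
      apply Finset.sum_subset (Finset.subset_univ A)
      intro i _ hi; exact hvA i hi
    set w : Option (Fin n) → ℝ := fun o => o.elim (1 - ∑ i, v i) v with hw
    set p : Option (Fin n) → (Fin n → ℝ) := fun o => o.elim 0 (fun i => Pi.single i 1) with hp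
    set t : Finset (Option (Fin n)) :=
      insert none (A.map ⟨some, Option.some_injective _⟩) with ht
    have hnone : none ∉ A.map ⟨some, Option.some_injective _⟩ := by
      simp
    have key : v = ∑ o ∈ t, w o • p o := by
      rw [ht, Finset.sum_insert hnone, Finset.sum_map]
      funext j
      simp only [hw, hp, Option.elim, Function.Embedding.coeFn_mk, Pi.add_apply, Pi.smul_apply,
        smul_eq_mul, Finset.sum_apply, Pi.zero_apply, mul_zero, zero_add]
      rw [Finset.sum_congr rfl (fun i (_ : i ∈ A) => by rw [Pi.single_apply])]
      simp only [mul_ite, mul_one, mul_zero]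
      rw [Finset.sum_ite_eq A j v]
      by_cases hj : j ∈ A
      · simp [hj]
      · simp [hj, hvA j hj]
    rw [key]
    apply (convex_convexHull ℝ _).sum_mem
    · rintro (_ | i) _
      · simpa [hw] using hvs
      · exact hv0 i
    · rw [ht, Finset.sum_insert hnone, Finset.sum_map]
      simp only [hw, Option.elim, Function.Embedding.coeFn_mk]
      rw [hsum]; ring
    · rintro (_ | i) hi
      · exact subset_convexHull ℝ _ (Set.mem_insert _ _)
      · have : i ∈ A := by
          rw [ht] at hi
          rcases Finset.mem_insert.mp hi with h | h
          · exact absurd h (by simp)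
          · simpa using h
        exact subset_convexHull ℝ _ (Set.mem_insert_iff.mpr (Or.inr ⟨i, this, rfl⟩))

lemma smul_Dsimp_eq {n : ℕ} (c : ℝ) (hc : 0 ≤ c) (A : Finset (Fin n)) :
    c • Dsimp A = {x | (∀ i, 0 ≤ x i) ∧ (∀ i ∉ A, x i = 0) ∧ ∑ i, x i ≤ c} := by
  rcases eq_or_lt_of_le hc with rfl | hc
  · have hne : (Dsimp A).Nonempty := ⟨0, by rw [Dsimp_eq]; exact ⟨fun _ => le_refl 0, fun _ _ => rfl, by simp⟩⟩
    rw [Set.zero_smul_set hne]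
    ext x
    simp only [Set.mem_zero, Set.mem_setOf_eq]
    constructor
    · rintro rfl; exact ⟨fun _ => le_refl 0, fun _ _ => rfl, by simp⟩
    · rintro ⟨h0, _, hs⟩
      have hz : ∑ i, x i = 0 := le_antisymm hs (Finset.sum_nonneg fun i _ => h0 i)
      funext i
      exact (Finset.sum_eq_zero_iff_of_nonneg (fun i _ => h0 i)).mp hz i (Finset.mem_univ i)
  · ext x
    rw [Set.mem_smul_set_iff_inv_smul_mem₀ (ne_of_gt hc), Dsimp_eq]
    simp only [Set.mem_setOf_eq, Pi.smul_apply, smul_eq_mul]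
    have hci : 0 < c⁻¹ := inv_pos.mpr hc
    constructor
    · rintro ⟨h0, hA, hs⟩
      refine ⟨fun i => ?_, fun i hi => ?_, ?_⟩
      · have := h0 i; nlinarith
      · have := hA i hi; nlinarith
      · rw [← Finset.mul_sum] at hs
        calc ∑ i, x i = c * (c⁻¹ * ∑ i, x i) := by field_simp
        _ ≤ c * 1 := by nlinarith
        _ = c := mul_one c
    · rintro ⟨h0, hA, hs⟩
      refine ⟨fun i => mul_nonneg (le_of_lt hci) (h0 i), fun i hi => by simp [hA i hi], ?_⟩
      rw [← Finset.mul_sum]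
      calc c⁻¹ * ∑ i, x i ≤ c⁻¹ * c := by nlinarith
      _ = 1 := inv_mul_cancel₀ (ne_of_gt hc)

lemma split_lemma {n : ℕ} (z : Finset (Fin n) → ℝ)
    (hmono : ∀ J K, J ⊆ K → z J ≤ z K)
    (hsub : ∀ J K, z (J ∪ K) + z (J ∩ K) ≤ z J + z K) :
    ∀ (A : Finset (Fin n)) (t : Fin n → ℝ) (c : ℝ), 0 ≤ c → (∀ i, 0 ≤ t i) →
      (∀ J, ∑ i ∈ J, t i ≤ z J + (if (A ∩ J).Nonempty then c else 0)) →
      ∃ u : Fin n → ℝ, (∀ i, 0 ≤ u i) ∧ (∀ i, u i ≤ t i) ∧ (∀ i ∉ A, u i = 0) ∧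
        (∑ i, u i ≤ c) ∧ (∀ J, ∑ i ∈ J, (t i - u i) ≤ z J) := by
  intro A
  induction A using Finset.induction_on with
  | empty =>
    intro t c hc ht hJ
    refine ⟨0, fun _ => le_refl 0, fun i => ht i, fun _ _ => rfl, by simp [hc], fun J => ?_⟩
    have := hJ J
    simpa using this
  | @insert a B ha IH =>
    intro t c hc ht hJ
    set F : Finset (Finset (Fin n)) :=
      Finset.univ.filter (fun J => a ∈ J ∧ J ∩ B = ∅) with hF
    have hFne : F.Nonempty := by
      refine ⟨{a}, ?_⟩
      simp only [hF, Finset.mem_filter, Finset.mem_univ, true_and]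
      exact ⟨Finset.mem_singleton_self a, Finset.singleton_inter_of_notMem ha⟩
    set g : Finset (Fin n) → ℝ := fun J => ∑ i ∈ J, t i - z J with hg
    set M : ℝ := max 0 (F.sup' hFne g) with hM
    have hM0 : 0 ≤ M := le_max_left _ _
    have hMF : ∀ J ∈ F, g J ≤ M := fun J hJ' =>
      le_trans (Finset.le_sup' g hJ') (le_max_right _ _)
    have hFmem : ∀ J ∈ F, a ∈ J ∧ J ∩ B = ∅ := by
      intro J hJ'; simpa [hF] using hJ'
    have hMta : M ≤ t a := by
      rw [hM, max_le_iff]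
      refine ⟨ht a, Finset.sup'_le hFne g ?_⟩
      intro J hJ'
      obtain ⟨haJ, hJB⟩ := hFmem J hJ'
      have h1 : ∑ i ∈ J, t i = t a + ∑ i ∈ J.erase a, t i :=
        (Finset.add_sum_erase _ _ haJ).symm
      have h2 : (insert a B ∩ J.erase a) = ∅ := by
        rw [Finset.insert_inter_of_notMem (Finset.notMem_erase a J),
          Finset.eq_empty_iff_forall_notMem]
        intro x hx
        rw [Finset.mem_inter] at hx
        have hx' : x ∈ J ∩ B := Finset.mem_inter.mpr ⟨Finset.mem_of_mem_erase hx.2, hx.1⟩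
        rw [hJB] at hx'; exact absurd hx' (Finset.notMem_empty x)
      have h3 := hJ (J.erase a)
      rw [h2] at h3
      simp only [Finset.not_nonempty_empty, if_false] at h3
      have h4 : z (J.erase a) ≤ z J := hmono _ _ (Finset.erase_subset a J)
      simp only [hg]
      linarith
    have hMc : M ≤ c := by
      rw [hM, max_le_iff]
      refine ⟨hc, Finset.sup'_le hFne g ?_⟩
      intro J hJ'
      obtain ⟨haJ, _⟩ := hFmem J hJ'
      have h3 := hJ J
      have hne : (insert a B ∩ J).Nonempty :=
        ⟨a, Finset.mem_inter.mpr ⟨Finset.mem_insert_self a B, haJ⟩⟩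
      rw [if_pos hne] at h3
      simp only [hg]; linarith
    have hcross : ∀ J' : Finset (Fin n), a ∉ J' → (B ∩ J').Nonempty →
        ∑ i ∈ J', t i - z J' ≤ c - M := by
      intro J' haJ' hBJ'
      have hABJ' : (insert a B ∩ J').Nonempty := by
        obtain ⟨x, hx⟩ := hBJ'
        rw [Finset.mem_inter] at hx
        exact ⟨x, Finset.mem_inter.mpr ⟨Finset.mem_insert_of_mem hx.1, hx.2⟩⟩
      have h0 : ∑ i ∈ J', t i - z J' ≤ c := by
        have := hJ J'; rw [if_pos hABJ'] at this; linarith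
      rw [hM]
      rcases max_cases (0:ℝ) (F.sup' hFne g) with ⟨hmax, _⟩ | ⟨hmax, _⟩
      · rw [hmax]; linarith
      · rw [hmax]
        have : ∀ J ∈ F, g J ≤ c - (∑ i ∈ J', t i - z J') := by
          intro J hJF
          obtain ⟨haJ, hJB⟩ := hFmem J hJF
          have hmod : ∑ i ∈ J ∪ J', t i + ∑ i ∈ J ∩ J', t i
              = ∑ i ∈ J, t i + ∑ i ∈ J', t i := Finset.sum_union_inter
          have hU : ∑ i ∈ J ∪ J', t i ≤ z (J ∪ J') + c := by
            have h := hJ (J ∪ J')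
            have hne : (insert a B ∩ (J ∪ J')).Nonempty :=
              ⟨a, Finset.mem_inter.mpr ⟨Finset.mem_insert_self a B,
                Finset.mem_union_left _ haJ⟩⟩
            rw [if_pos hne] at h; exact h
          have hI : ∑ i ∈ J ∩ J', t i ≤ z (J ∩ J') := by
            have h := hJ (J ∩ J')
            have hempty : (insert a B ∩ (J ∩ J')) = ∅ := by
              rw [Finset.eq_empty_iff_forall_notMem]
              intro x hx
              simp only [Finset.mem_inter, Finset.mem_insert] at hx
              obtain ⟨hx1 | hx1, hx2, hx3⟩ := hx
              · exact haJ' (hx1 ▸ hx3)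
              · have : x ∈ J ∩ B := Finset.mem_inter.mpr ⟨hx2, hx1⟩
                rw [hJB] at this; exact absurd this (Finset.notMem_empty x)
            rw [hempty] at h
            simp only [Finset.not_nonempty_empty, if_false, add_zero] at h
            exact h
          have hS := hsub J J'
          simp only [hg]
          linarith
        have := Finset.sup'_le hFne g this
        linarith
    -- reduced vector and budget
    set t' : Fin n → ℝ := fun i => t i - (if i = a then M else 0) with ht'
    have hsumt' : ∀ J : Finset (Fin n),
        ∑ i ∈ J, t' i = ∑ i ∈ J, t i - (if a ∈ J then M else 0) := by
      intro J
      simp only [ht', Finset.sum_sub_distrib]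
      congr 1
      rw [Finset.sum_ite_eq' J a (fun _ => M)]
    have ht'0 : ∀ i, 0 ≤ t' i := by
      intro i
      simp only [ht']
      rcases eq_or_ne i a with rfl | hia
      · rw [if_pos rfl]; linarith
      · rw [if_neg hia]; linarith [ht i]
    have hc' : (0:ℝ) ≤ c - M := by linarith
    have hhyp : ∀ J, ∑ i ∈ J, t' i ≤ z J + (if (B ∩ J).Nonempty then c - M else 0) := by
      intro J
      rw [hsumt' J]
      by_cases haJ : a ∈ J
      · by_cases hBJ : (B ∩ J).Nonempty
        · rw [if_pos haJ, if_pos hBJ]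
          have h := hJ J
          have hne : (insert a B ∩ J).Nonempty :=
            ⟨a, Finset.mem_inter.mpr ⟨Finset.mem_insert_self a B, haJ⟩⟩
          rw [if_pos hne] at h
          linarith
        · rw [if_pos haJ, if_neg hBJ]
          have hJF : J ∈ F := by
            simp only [hF, Finset.mem_filter, Finset.mem_univ, true_and]
            refine ⟨haJ, ?_⟩
            rw [← Finset.not_nonempty_iff_eq_empty]
            intro h
            exact hBJ (by rwa [Finset.inter_comm])
          have := hMF J hJF
          simp only [hg] at this
          linarith
      · by_cases hBJ : (B ∩ J).Nonempty
        · rw [if_neg haJ, if_pos hBJ]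
          have := hcross J haJ hBJ
          linarith
        · rw [if_neg haJ, if_neg hBJ]
          have hempty : (insert a B ∩ J) = ∅ := by
            rw [Finset.eq_empty_iff_forall_notMem]
            intro x hx
            simp only [Finset.mem_inter, Finset.mem_insert] at hx
            obtain ⟨hx1 | hx1, hx2⟩ := hx
            · exact haJ (hx1 ▸ hx2)
            · exact hBJ ⟨x, Finset.mem_inter.mpr ⟨hx1, hx2⟩⟩
          have h := hJ J
          rw [hempty] at h
          simp only [Finset.not_nonempty_empty, if_false] at h
          simpa using h
    obtain ⟨u', hu'0, hu't, hu'B, hu'sum, hu'J⟩ := IH t' (c - M) hc' ht'0 hhyp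
    refine ⟨fun i => u' i + (if i = a then M else 0), fun i => ?_, fun i => ?_,
      fun i hi => ?_, ?_, fun J => ?_⟩
    · by_cases hia : i = a
      · simp only [if_pos hia]; have := hu'0 i; linarith
      · simp only [if_neg hia, add_zero]; exact hu'0 i
    · have h := hu't i
      simp only [ht'] at h
      show u' i + (if i = a then M else 0) ≤ t i
      linarith
    · have hia : i ≠ a := fun h => hi (h ▸ Finset.mem_insert_self a B)
      have hiB : i ∉ B := fun h => hi (Finset.mem_insert_of_mem h)
      simp only [if_neg hia, add_zero]
      exact hu'B i hiB
    · rw [Finset.sum_add_distrib, Finset.sum_ite_eq' Finset.univ a (fun _ => M),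
        if_pos (Finset.mem_univ a)]
      linarith
    · have h := hu'J J
      have : ∀ i ∈ J, t i - (u' i + (if i = a then M else 0)) = t' i - u' i := by
        intro i _
        simp only [ht']
        ring
      rw [Finset.sum_congr rfl this]
      exact h

lemma aux_sum_eq {n : ℕ} (y : Finset (Fin n) → ℝ) (hy : ∀ I, 0 ≤ y I)
    (S : Finset (Finset (Fin n))) :
    ∑ I ∈ S, y I • Dsimp I
      = Qpoly n (fun J => ∑ I ∈ S, if (I ∩ J).Nonempty then y I else 0) := by
  induction S using Finset.induction_on with
  | empty =>
    ext x
    simp only [Finset.sum_empty]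
    constructor
    · rintro (rfl : x = 0)
      exact ⟨fun i => le_refl 0, fun J => by simp⟩
    · rintro ⟨h0, hs⟩
      show x = 0
      funext i
      refine le_antisymm ?_ (h0 i)
      have := hs {i}
      simpa using this
  | @insert A S' hA IH =>
    rw [Finset.sum_insert hA, IH]
    set z' : Finset (Fin n) → ℝ := fun J => ∑ I ∈ S', if (I ∩ J).Nonempty then y I else 0
      with hz'
    have hz'mono : ∀ J K, J ⊆ K → z' J ≤ z' K := by
      intro J K hJK
      apply Finset.sum_le_sum
      intro I _
      by_cases h : (I ∩ J).Nonempty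
      · rw [if_pos h, if_pos]
        obtain ⟨x, hx⟩ := h
        rw [Finset.mem_inter] at hx
        exact ⟨x, Finset.mem_inter.mpr ⟨hx.1, hJK hx.2⟩⟩
      · rw [if_neg h]
        by_cases h' : (I ∩ K).Nonempty
        · rw [if_pos h']; exact hy I
        · rw [if_neg h']
    have hz'sub : ∀ J K, z' (J ∪ K) + z' (J ∩ K) ≤ z' J + z' K := by
      intro J K
      simp only [hz', ← Finset.sum_add_distrib]
      apply Finset.sum_le_sum
      intro I _
      have hU : (I ∩ (J ∪ K)).Nonempty → (I ∩ J).Nonempty ∨ (I ∩ K).Nonempty := by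
        rintro ⟨x, hx⟩
        rw [Finset.mem_inter, Finset.mem_union] at hx
        rcases hx.2 with h | h
        · exact Or.inl ⟨x, Finset.mem_inter.mpr ⟨hx.1, h⟩⟩
        · exact Or.inr ⟨x, Finset.mem_inter.mpr ⟨hx.1, h⟩⟩
      have hI : (I ∩ (J ∩ K)).Nonempty → (I ∩ J).Nonempty ∧ (I ∩ K).Nonempty := by
        rintro ⟨x, hx⟩
        simp only [Finset.mem_inter] at hx
        exact ⟨⟨x, Finset.mem_inter.mpr ⟨hx.1, hx.2.1⟩⟩, ⟨x, Finset.mem_inter.mpr ⟨hx.1, hx.2.2⟩⟩⟩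
      by_cases hJ : (I ∩ J).Nonempty <;> by_cases hK : (I ∩ K).Nonempty
      · rw [if_pos hJ, if_pos hK]
        have h1 : (if (I ∩ (J ∪ K)).Nonempty then y I else 0) ≤ y I := by
          split <;> simp [hy I]
        have h2 : (if (I ∩ (J ∩ K)).Nonempty then y I else 0) ≤ y I := by
          split <;> simp [hy I]
        linarith
      · rw [if_pos hJ, if_neg hK]
        rw [if_neg (fun h => hK (hI h).2)]
        have h1 : (if (I ∩ (J ∪ K)).Nonempty then y I else 0) ≤ y I := by
          split <;> simp [hy I]
        linarith
      · rw [if_neg hJ, if_pos hK]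
        rw [if_neg (fun h => hJ (hI h).1)]
        have h1 : (if (I ∩ (J ∪ K)).Nonempty then y I else 0) ≤ y I := by
          split <;> simp [hy I]
        linarith
      · rw [if_neg hJ, if_neg hK,
          if_neg (fun h => (hU h).elim hJ hK), if_neg (fun h => hJ (hI h).1)]
    ext x
    rw [Set.mem_add]
    constructor
    · rintro ⟨u, hu, w, hw, rfl⟩
      rw [smul_Dsimp_eq (y A) (hy A) A] at hu
      obtain ⟨hu0, huA, husum⟩ := hu
      obtain ⟨hw0, hwJ⟩ := hw
      refine ⟨fun i => add_nonneg (hu0 i) (hw0 i), fun J => ?_⟩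
      simp only [Finset.sum_insert hA]
      have hsplit : ∑ i ∈ J, (u + w) i = ∑ i ∈ J, u i + ∑ i ∈ J, w i := by
        simp [Finset.sum_add_distrib]
      rw [hsplit]
      have hwz := hwJ J
      by_cases hAJ : (A ∩ J).Nonempty
      · rw [if_pos hAJ]
        have : ∑ i ∈ J, u i ≤ ∑ i, u i :=
          Finset.sum_le_sum_of_subset_of_nonneg (Finset.subset_univ J)
            (fun i _ _ => hu0 i)
        linarith
      · rw [if_neg hAJ]
        have : ∑ i ∈ J, u i = 0 := by
          apply Finset.sum_eq_zero
          intro i hi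
          apply huA
          intro hiA
          exact hAJ ⟨i, Finset.mem_inter.mpr ⟨hiA, hi⟩⟩
        linarith
    · rintro ⟨hx0, hxJ⟩
      have hxJ' : ∀ J, ∑ i ∈ J, x i ≤ z' J + (if (A ∩ J).Nonempty then y A else 0) := by
        intro J
        have := hxJ J
        simp only [Finset.sum_insert hA] at this
        linarith
      obtain ⟨u, hu0, hux, huA, husum, huJ⟩ :=
        split_lemma z' hz'mono hz'sub A x (y A) (hy A) hx0 hxJ'
      refine ⟨u, ?_, fun i => x i - u i,
        ⟨fun i => by show (0:ℝ) ≤ x i - u i; linarith [hux i], huJ⟩, by funext i; simp⟩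
      rw [smul_Dsimp_eq (y A) (hy A) A]
      exact ⟨hu0, huA, husum⟩

theorem sum_Dsimp_eq_Qpoly (n : ℕ) (y : Finset (Fin n) → ℝ) (hy : ∀ I, 0 ≤ y I) :
    ∑ I ∈ (Finset.univ : Finset (Fin n)).powerset.filter (fun I => I.Nonempty),
        y I • Dsimp I
      = Qpoly n (fun J => ∑ I ∈ (Finset.univ : Finset (Fin n)).powerset.filter
          (fun I => (I ∩ J).Nonempty), y I) := by
  have hz : (fun J => ∑ I ∈ ((Finset.univ : Finset (Fin n)).powerset.filter
        (fun I => I.Nonempty)), if (I ∩ J).Nonempty then y I else 0)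
      = fun J => ∑ I ∈ (Finset.univ : Finset (Fin n)).powerset.filter
          (fun I => (I ∩ J).Nonempty), y I := by
    funext J
    rw [Finset.sum_filter, Finset.sum_filter]
    apply Finset.sum_congr rfl
    intro I _
    by_cases hI : I.Nonempty
    · rw [if_pos hI]
    · rw [if_neg hI]
      rw [Finset.not_nonempty_iff_eq_empty] at hI
      subst hI
      rw [if_neg]
      simp
  rw [aux_sum_eq y hy, hz]
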